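/- Let κ be an uncountable regular cardinal with κ^{<κ}=κ and let K be 2 or κ. A set A ⊆ K^κ with |A| > κ is a Lusin set for κ (i.e. a κ⁺-κ-Lusin set) if and only if A is κ⁺-concentrated on every dense set D ⊆ K^κ with |D| = κ. -/

import Mathlib

noncomputable section

open Cardinal Set

namespace GenSp

/-- The index set: a canonical type of order type `κ.ord`. -/
abbrev I (κ : Cardinal.{0}) : Type := κ.ord.ToType

variable (κ : Cardinal.{0}) (A : Type)

/-- The generalized space `A^κ`. -/
abbrev Sp : Type := I κ → A

/-- The basic clopen set `[x ↾ ξ]`: all functions agreeing with `x` below `ξ`. -/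
def cyl (x : Sp κ A) (ξ : I κ) : Set (Sp κ A) := {y | ∀ β < ξ, y β = x β}

/-- The bounded topology on `A^κ`, generated by the basic clopen sets. -/
def bt : TopologicalSpace (Sp κ A) :=
  .generateFrom {S | ∃ x ξ, S = cyl κ A x ξ}

/-- Open in the bounded topology. -/
def OpenK (s : Set (Sp κ A)) : Prop := @IsOpen _ (bt κ A) s

/-- Closed in the bounded topology. -/
def ClosedK (s : Set (Sp κ A)) : Prop := @IsClosed _ (bt κ A) s

/-- Nowhere dense in the bounded topology. -/
def NwdK (s : Set (Sp κ A)) : Prop := @IsNowhereDense _ (bt κ A) s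

/-- κ-meagre: a union of (at most) κ nowhere dense sets. -/
def MeagreK (s : Set (Sp κ A)) : Prop :=
  ∃ f : I κ → Set (Sp κ A), (∀ i, NwdK κ A (f i)) ∧ s = ⋃ i, f i

/-- κ-strongly null set. -/
def SNullK (S : Set (Sp κ A)) : Prop :=
  ∀ ξ : I κ → I κ, ∃ a : I κ → Sp κ A, S ⊆ ⋃ α, cyl κ A (a α) (ξ α)

/-- Coordinatewise addition over `ℤ₂` (translation by `x`). -/
def xadd (x y : Sp κ Bool) : Sp κ Bool := fun i => xor (x i) (y i)

/-- The covering number of the κ-meagre ideal. -/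
def covM : Cardinal :=
  sInf {c | ∃ 𝒜 : Set (Set (Sp κ A)), #𝒜 = c ∧ (∀ s ∈ 𝒜, MeagreK κ A s) ∧ ⋃₀ 𝒜 = Set.univ}

/-- The cofinality of the κ-meagre ideal. -/
def cofM : Cardinal :=
  sInf {c | ∃ 𝒜 : Set (Set (Sp κ A)), #𝒜 = c ∧ (∀ s ∈ 𝒜, MeagreK κ A s) ∧
    ∀ t, MeagreK κ A t → ∃ s ∈ 𝒜, t ⊆ s}

/-- κ is weakly compact: uncountable and with the partition property κ → (κ)²₂. -/
def IsWeaklyCompact (κ : Cardinal.{0}) : Prop :=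
  ℵ₀ < κ ∧ ∀ c : I κ → I κ → Bool, ∃ H : Set (I κ), #H = κ ∧
    ∃ b : Bool, ∀ i ∈ H, ∀ j ∈ H, i < j → c i j = b

/-- `S` is κ-meagre relative to `P` (in the subspace topology). -/
def MeagreInK (P S : Set (Sp κ A)) : Prop :=
  ∃ f : I κ → Set P,
    (∀ i, @IsNowhereDense _ (TopologicalSpace.induced Subtype.val (bt κ A)) (f i)) ∧
    {x : P | (x : Sp κ A) ∈ S} = ⋃ i, f i

/-- Perfect set in the bounded topology. -/
def PerfK (P : Set (Sp κ A)) : Prop := @Perfect _ (bt κ A) P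

/-- Perfectly κ-meagre set. -/
def PMeagreK (S : Set (Sp κ A)) : Prop := ∀ P, PerfK κ A P → MeagreInK κ A P S

/-- κ-λ-set. -/
def KLambdaSet (S : Set (Sp κ A)) : Prop :=
  ∀ B ⊆ S, #B ≤ κ → ∃ G : I κ → Set (Sp κ A),
    (∀ i, OpenK κ A (G i)) ∧ (⋂ i, G i) ∩ S = B

/-- κ-σ-set. -/
def KSigmaSet (S : Set (Sp κ A)) : Prop :=
  ∀ F : I κ → Set (Sp κ A), (∀ i, ClosedK κ A (F i)) →
    ∃ G : I κ → Set (Sp κ A), (∀ i, OpenK κ A (G i)) ∧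
      S ∩ (⋃ i, F i) = S ∩ (⋂ i, G i)

/-- κ-γ-set: every open (proper) κ-cover contains a κ-γ-subcover of size κ. -/
def KGammaSet (X : Set (Sp κ A)) : Prop :=
  ∀ 𝒰 : Set (Set (Sp κ A)), (∀ U ∈ 𝒰, OpenK κ A U) → X ∉ 𝒰 →
    (∀ C ⊆ X, #C < κ → ∃ U ∈ 𝒰, C ⊆ U) →
    ∃ U : I κ → Set (Sp κ A), (∀ α, U α ∈ 𝒰) ∧
      X ⊆ ⋃ α, ⋂ β, ⋂ (_ : α < β), U β

/-- A (proper) open cover of `X` of size κ, indexed by `I κ`. -/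
def IsOCovSeq (X : Set (Sp κ A)) (U : I κ → Set (Sp κ A)) : Prop :=
  (∀ α, OpenK κ A (U α)) ∧ (∀ α, U α ≠ X) ∧ X ⊆ ⋃ α, U α

/-- A (proper) κ-γ-cover of `X`, indexed by `I κ`. -/
def IsGammaCovSeq (X : Set (Sp κ A)) (U : I κ → Set (Sp κ A)) : Prop :=
  (∀ α, OpenK κ A (U α)) ∧ (∀ α, U α ≠ X) ∧
    X ⊆ ⋃ α, ⋂ β, ⋂ (_ : α < β), U β

/-- The cover `U` is essentially of size κ: no subfamily of size `< κ` covers `X`. -/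
def EssK (X : Set (Sp κ A)) (U : I κ → Set (Sp κ A)) : Prop :=
  ∀ s : Set (I κ), #s < κ → ¬ X ⊆ ⋃ β ∈ s, U β

/-- The selection principle `S₁^κ(Γ_κ, Γ_κ)`. -/
def S1GammaGamma (X : Set (Sp κ A)) : Prop :=
  ∀ 𝒰 : I κ → I κ → Set (Sp κ A), (∀ α, IsGammaCovSeq κ A X (𝒰 α)) →
    ∃ f : I κ → I κ, IsGammaCovSeq κ A X (fun α => 𝒰 α (f α))

/-- The κ-Hurewicz property `U^κ_{<κ}(O_κ, Γ_κ)`. -/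
def KHurewicz (X : Set (Sp κ A)) : Prop :=
  ∀ 𝒰 : I κ → I κ → Set (Sp κ A), (∀ α, IsOCovSeq κ A X (𝒰 α)) →
    (∀ α, EssK κ A X (𝒰 α)) →
    ∃ V : I κ → Set (I κ), (∀ α, #(V α) < κ) ∧
      IsGammaCovSeq κ A X (fun α => ⋃ β ∈ V α, 𝒰 α β)

/-- The κ-Menger property `U^κ_{<κ}(O_κ, O_κ)`. -/
def KMenger (X : Set (Sp κ A)) : Prop :=
  ∀ 𝒰 : I κ → I κ → Set (Sp κ A), (∀ α, IsOCovSeq κ A X (𝒰 α)) →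
    (∀ α, EssK κ A X (𝒰 α)) →
    ∃ V : I κ → Set (I κ), (∀ α, #(V α) < κ) ∧
      IsOCovSeq κ A X (fun α => ⋃ β ∈ V α, 𝒰 α β)

/-- The κ-Rothberger property `S₁^κ(O_κ, O_κ)`. -/
def KRothberger (X : Set (Sp κ A)) : Prop :=
  ∀ 𝒰 : I κ → I κ → Set (Sp κ A), (∀ α, IsOCovSeq κ A X (𝒰 α)) →
    ∃ f : I κ → I κ, IsOCovSeq κ A X (fun α => 𝒰 α (f α))

/-- Closed unbounded subset of `I κ`. -/
def IsClubK (S : Set (I κ)) : Prop :=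
  (∀ a : I κ, ∃ b ∈ S, a < b) ∧
  (∀ a : I κ, (∃ b, b < a) → (∀ b < a, ∃ c ∈ S, b < c ∧ c < a) → a ∈ S)

/-- Stationary subset of `I κ`. -/
def IsStatK (S : Set (I κ)) : Prop :=
  ∀ C : Set (I κ), IsClubK κ C → (S ∩ C).Nonempty

/-- The diamond principle `◇_κ(E)`. -/
def DiamondK (E : Set (I κ)) : Prop :=
  ∃ s : I κ → Set (I κ), (∀ α, s α ⊆ Iio α) ∧
    ∀ X : Set (I κ), IsStatK κ {α | α ∈ E ∧ X ∩ Iio α = s α}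

/-- The guessing principle `◇_κ(E, 2^κ, NS_κ)`. -/
def DiamondFunK (E : Set (I κ)) : Prop :=
  ∃ s : I κ → Sp κ Bool,
    ∀ x : Sp κ Bool, IsStatK κ {α | α ∈ E ∧ ∀ β < α, x β = s α β}

/-- `S` is `X`-small. -/
def XSmall (X : Set (I κ)) (S : Set (Sp κ A)) : Prop :=
  ∃ a : I κ → Sp κ A, S ⊆ ⋃ α ∈ X, cyl κ A (a α) α

/-- `S` is small in `A^κ`. -/
def SmallK (S : Set (Sp κ A)) : Prop :=
  ∃ lam : Cardinal, lam < κ ∧ ∀ α : I κ, ∃ T : Set (Sp κ A),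
    #T ≤ lam ∧ S ⊆ ⋃ x ∈ T, cyl κ A x α



section Aux

variable {κ : Cardinal.{0}} {A : Type}

lemma mem_cyl_self (x : Sp κ A) (ξ : I κ) : x ∈ cyl κ A x ξ := fun _ _ => rfl

lemma cyl_eq_of_mem {x y : Sp κ A} {ξ : I κ} (h : y ∈ cyl κ A x ξ) :
    cyl κ A y ξ = cyl κ A x ξ := by
  ext z
  constructor <;> intro hz β hβ
  · rw [hz β hβ, h β hβ]
  · rw [hz β hβ, ← h β hβ]

lemma nonempty_I (hk : Cardinal.aleph0 < κ) : Nonempty (I κ) := by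
  rw [← Cardinal.mk_ne_zero_iff, Cardinal.mk_ord_toType]
  exact (Cardinal.aleph0_pos.trans hk).ne'

lemma isBasis (hk : Cardinal.aleph0 < κ) :
    @TopologicalSpace.IsTopologicalBasis (Sp κ A) (bt κ A)
      {S | ∃ x ξ, S = cyl κ A x ξ} := by
  letI := bt κ A
  have hne : Nonempty (I κ) := nonempty_I hk
  refine ⟨?_, ?_, rfl⟩
  · rintro t₁ ⟨x, ξ, rfl⟩ t₂ ⟨y, η, rfl⟩ z ⟨hz1, hz2⟩
    refine ⟨cyl κ A z (max ξ η), ⟨z, max ξ η, rfl⟩, mem_cyl_self z (max ξ η), fun w hw => ⟨?_, ?_⟩⟩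
    · intro β hβ; rw [hw β (lt_of_lt_of_le hβ (le_max_left ξ η)), hz1 β hβ]
    · intro β hβ; rw [hw β (lt_of_lt_of_le hβ (le_max_right ξ η)), hz2 β hβ]
  · apply Set.eq_univ_of_forall
    intro x
    obtain ⟨ξ⟩ := hne
    exact ⟨cyl κ A x ξ, ⟨x, ξ, rfl⟩, mem_cyl_self x ξ⟩

lemma openK_cyl (x : Sp κ A) (ξ : I κ) : OpenK κ A (cyl κ A x ξ) :=
  TopologicalSpace.isOpen_generateFrom_of_mem ⟨x, ξ, rfl⟩

lemma exists_dense_subset (hk : Cardinal.aleph0 < κ) (hpow : κ ^< κ = κ)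
    (hA2 : 2 ≤ #A) (hAk : #A ≤ κ)
    (G : Set (Sp κ A)) (hGo : OpenK κ A G) (hGd : @Dense _ (bt κ A) G) :
    ∃ D ⊆ G, @Dense _ (bt κ A) D ∧ #D = κ := by
  classical
  letI := bt κ A
  have hI : #(I κ) = κ := Cardinal.mk_ord_toType κ
  have hAnt : Nontrivial A := Cardinal.one_lt_iff_nontrivial.1 (lt_of_lt_of_le one_lt_two hA2)
  have hAne : Nonempty A := ⟨Classical.arbitrary A⟩
  have hGne : G.Nonempty := hGd.nonempty
  have B := isBasis (κ := κ) (A := A) hk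
  -- choice of points for the dense core
  let ext : ∀ ξ : I κ, (↥(Set.Iio ξ) → A) → Sp κ A := fun ξ g β =>
    if h : β < ξ then g ⟨β, h⟩ else Classical.arbitrary A
  let d : ((ξ : I κ) × (↥(Set.Iio ξ) → A)) → Sp κ A := fun p =>
    if h : (cyl κ A (ext p.1 p.2) p.1 ∩ G).Nonempty then h.choose else hGne.choose
  have hdG : ∀ p, d p ∈ G := by
    intro p
    by_cases h : (cyl κ A (ext p.1 p.2) p.1 ∩ G).Nonempty
    · simpa only [d, dif_pos h] using h.choose_spec.2
    · simpa only [d, dif_neg h] using hGne.choose_spec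
  have hkey : ∀ (x : Sp κ A) (ξ : I κ), d ⟨ξ, fun b => x b⟩ ∈ cyl κ A x ξ := by
    intro x ξ
    have hext : ext ξ (fun b => x b) ∈ cyl κ A x ξ := by
      intro β hβ; simp [ext, dif_pos hβ]
    have hcyl : cyl κ A (ext ξ (fun b => x b)) ξ = cyl κ A x ξ := cyl_eq_of_mem hext
    have h : (cyl κ A (ext ξ (fun b => x b)) ξ ∩ G).Nonempty := by
      rw [hcyl]
      exact hGd.inter_open_nonempty _ (openK_cyl x ξ) ⟨x, mem_cyl_self x ξ⟩
    simp only [d, dif_pos h]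
    exact hcyl.subset h.choose_spec.1
  have hD0card : #(Set.range d) ≤ κ := by
    refine (Cardinal.mk_range_le).trans ?_
    rw [Cardinal.mk_sigma]
    refine (Cardinal.sum_le_sum _ (fun _ => κ) ?_).trans ?_
    · intro ξ
      have h1 : #(↥(Set.Iio ξ) → A) = #A ^ #(↥(Set.Iio ξ)) := by
        simp [Cardinal.mk_arrow]
      rw [h1]
      calc #A ^ #(↥(Set.Iio ξ)) ≤ κ ^ #(↥(Set.Iio ξ)) :=
            Cardinal.power_le_power_right hAk
        _ ≤ κ ^< κ := Cardinal.le_powerlt κ (Cardinal.mk_Iio_ord_toType ξ)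
        _ = κ := hpow
    · rw [Cardinal.sum_const', hI, Cardinal.mul_eq_self hk.le]
  have hD0d : @Dense _ (bt κ A) (Set.range d) := by
    rw [B.dense_iff]
    rintro o ⟨x, ξ, rfl⟩ -
    exact ⟨d ⟨ξ, fun b => x b⟩, hkey x ξ, Set.mem_range_self _⟩
  -- padding inside G
  obtain ⟨x₀, hx₀⟩ := hGne
  obtain ⟨v, ⟨x₀', ξ₀, rfl⟩, hx₀v, hvG⟩ := B.exists_subset_of_mem_open hx₀ hGo
  have hceq : cyl κ A x₀ ξ₀ = cyl κ A x₀' ξ₀ := cyl_eq_of_mem hx₀v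
  have hnex : ∀ a : A, ∃ b, b ≠ a := fun a => exists_ne a
  choose nex hnexs using hnex
  let p : ↥(Set.Ici ξ₀) → Sp κ A := fun γ => Function.update x₀ γ.1 (nex (x₀ γ.1))
  have hpcyl : ∀ γ, p γ ∈ cyl κ A x₀ ξ₀ := by
    intro γ β hβ
    exact Function.update_of_ne (ne_of_lt (lt_of_lt_of_le hβ γ.2)) _ _
  have hpinj : Function.Injective p := by
    intro γ γ' h
    by_contra hne'
    have hne'' : γ.1 ≠ γ'.1 := fun he => hne' (Subtype.ext he)
    have h1 : p γ γ.1 = nex (x₀ γ.1) := Function.update_self _ _ _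
    have h2 : p γ' γ.1 = x₀ γ.1 := Function.update_of_ne hne'' _ _
    exact hnexs (x₀ γ.1) (by rw [← h1, h, h2])
  have hIci : κ ≤ #(↥(Set.Ici ξ₀)) := by
    by_contra hlt
    push_neg at hlt
    have huniv : (Set.univ : Set (I κ)) = Set.Iio ξ₀ ∪ Set.Ici ξ₀ := by
      ext γ; simp [lt_or_ge γ ξ₀]
    have : κ ≤ #(↥(Set.Iio ξ₀ ∪ Set.Ici ξ₀)) := by
      rw [← huniv, Cardinal.mk_univ, hI]
    exact absurd (this.trans (Cardinal.mk_union_le _ _))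
      (not_le.2 (Cardinal.add_lt_of_lt hk.le (Cardinal.mk_Iio_ord_toType ξ₀) hlt))
  refine ⟨Set.range d ∪ Set.range p, ?_, hD0d.mono Set.subset_union_left, ?_⟩
  · refine Set.union_subset (Set.range_subset_iff.2 hdG) (Set.range_subset_iff.2 ?_)
    intro γ
    exact hvG (hceq ▸ hpcyl γ)
  · refine le_antisymm ?_ ?_
    · refine (Cardinal.mk_union_le _ _).trans ?_
      have h1 : #(Set.range p) ≤ κ :=
        Cardinal.mk_range_le.trans ((Cardinal.mk_set_le _).trans_eq hI)
      calc #(Set.range d) + #(Set.range p) ≤ κ + κ := add_le_add hD0card h1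
        _ = κ := Cardinal.add_eq_self hk.le
    · calc κ ≤ #(↥(Set.Ici ξ₀)) := hIci
        _ = #(Set.range p) := (Cardinal.mk_range_eq p hpinj).symm
        _ ≤ _ := Cardinal.mk_le_mk_of_subset Set.subset_union_right

end Aux

theorem stmt8 (κ : Cardinal.{0}) (hk : Cardinal.aleph0 < κ) (hreg : κ.IsRegular) (hpow : κ ^< κ = κ)
    (A : Type) (hA : #A = 2 ∨ #A = κ)
    (L : Set (Sp κ A)) (hL : κ < #L) :
    (∀ X, MeagreK κ A X → #↥(L ∩ X) ≤ κ) ↔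
      (∀ D : Set (Sp κ A), @Dense _ (bt κ A) D → #D = κ →
        ∀ G, OpenK κ A G → D ⊆ G → #↥(L \ G) ≤ κ) := by
  classical
  letI := bt κ A
  have hne : Nonempty (I κ) := nonempty_I hk
  have hI : #(I κ) = κ := Cardinal.mk_ord_toType κ
  have h2k : (2 : Cardinal) ≤ κ := by
    have h2 : ((2 : ℕ) : Cardinal) < Cardinal.aleph0 := Cardinal.nat_lt_aleph0 2
    exact_mod_cast (h2.trans hk).le
  have hA2 : 2 ≤ #A := by
    rcases hA with h | h <;> rw [h]
    exact h2k
  have hAk : #A ≤ κ := by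
    rcases hA with h | h <;> rw [h]
    exact h2k
  constructor
  · intro h D hDd hDk G hGo hGsub
    have hGd : @Dense _ (bt κ A) G := hDd.mono hGsub
    have hmea : MeagreK κ A Gᶜ := by
      refine ⟨fun _ => Gᶜ, fun _ => ?_, (Set.iUnion_const _).symm⟩
      show interior (closure Gᶜ) = ∅
      rw [IsClosed.closure_eq hGo.isClosed_compl, interior_compl, hGd.closure_eq,
        Set.compl_univ]
    have := h Gᶜ hmea
    rwa [← Set.diff_eq] at this
  · intro h X hX
    obtain ⟨f, hfnwd, rfl⟩ := hX
    have hi : ∀ i, #(↥(L ∩ f i)) ≤ κ := by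
      intro i
      set G := (closure (f i))ᶜ with hGdef
      have hGo : OpenK κ A G := isClosed_closure.isOpen_compl
      have hGd : @Dense _ (bt κ A) G :=
        interior_eq_empty_iff_dense_compl.1 (hfnwd i)
      obtain ⟨D, hDG, hDd, hDk⟩ := exists_dense_subset hk hpow hA2 hAk G hGo hGd
      have hbound := h D hDd hDk G hGo hDG
      refine le_trans (Cardinal.mk_le_mk_of_subset ?_) hbound
      rintro x ⟨hxL, hxf⟩
      exact ⟨hxL, fun hG => hG (subset_closure hxf)⟩
    rw [Set.inter_iUnion]
    calc #(↥(⋃ i, L ∩ f i)) ≤ #(I κ) * ⨆ i, #(↥(L ∩ f i)) := Cardinal.mk_iUnion_le _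
      _ ≤ κ * κ := mul_le_mul' hI.le (ciSup_le' hi)
      _ = κ := Cardinal.mul_eq_self hk.le


end GenSp
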